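/- For 0 ≤ λ < 1 and θ > 0, the series ∑_{n=0}^∞ (θ + λn)^n / n! · e^{-θ - λn} converges to 1/(1 - λ). -/

import Mathlib

open Finset Real

namespace GPD

/-- n-th finite difference kills polynomials of degree < n. -/
lemma alt_sum (n : ℕ) : ∀ j < n, ∀ c : ℝ,
    ∑ k ∈ range (n+1), (-1:ℝ)^k * (n.choose k) * (c+k)^j = 0 := by
  induction n with
  | zero => intro j hj; omega
  | succ n ih =>
    intro j hj c
    have key : ∀ c : ℝ, ∑ k ∈ range (n+1+1), (-1:ℝ)^k * ((n+1).choose k) * (c+k)^j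
        = (∑ k ∈ range (n+1), (-1:ℝ)^k * (n.choose k) * (c+k)^j)
          - ∑ k ∈ range (n+1), (-1:ℝ)^k * (n.choose k) * ((c+1)+k)^j := by
      intro c
      rw [Finset.sum_range_succ' (fun k => (-1:ℝ)^k * ((n+1).choose k) * (c+k)^j) (n+1)]
      have h1 : ∀ k ∈ range (n+1),
          (-1:ℝ)^(k+1) * (((n+1).choose (k+1) : ℕ) : ℝ) * (c+(k+1:ℕ))^j
          = ((-1:ℝ)^(k+1) * (n.choose k) * (c+(k+1:ℕ))^j
            + (-1:ℝ)^(k+1) * (n.choose (k+1)) * (c+(k+1:ℕ))^j) := by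
        intro k _
        rw [Nat.choose_succ_succ]
        push_cast
        ring
      rw [Finset.sum_congr rfl h1, Finset.sum_add_distrib]
      have h2 : ∑ k ∈ range (n+1), ((-1:ℝ)^(k+1) * (n.choose k) * (c+(k+1:ℕ))^j
          + (-1:ℝ)^k * (n.choose k) * ((c+1)+k)^j) = 0 := by
        apply Finset.sum_eq_zero
        intro k _
        push_cast
        rw [show c + ((k:ℝ)+1) = (c+1)+(k:ℝ) from by ring, pow_succ]
        ring
      rw [Finset.sum_add_distrib] at h2
      have h3 : (∑ k ∈ range (n+1), (-1:ℝ)^(k+1) * (n.choose (k+1)) * (c+(k+1:ℕ))^j)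
          + (-1:ℝ)^0 * (((n+1).choose 0 : ℕ) : ℝ) * (c+(0:ℕ))^j
          = ∑ k ∈ range (n+1), (-1:ℝ)^k * (n.choose k) * (c+k)^j := by
        rw [Finset.sum_range_succ (fun k => (-1:ℝ)^(k+1) * (n.choose (k+1)) * (c+(k+1:ℕ))^j) n]
        rw [Finset.sum_range_succ' (fun k => (-1:ℝ)^k * (n.choose k) * (c+k)^j) n]
        simp [Nat.choose_succ_self]
      linarith [h2, h3]
    rw [key c]
    rcases Nat.lt_succ_iff_lt_or_eq.mp hj with h | h
    · rw [ih j h c, ih j h (c+1)]; ring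
    · subst h
      have expand : ∀ k : ℕ, ((c+1)+(k:ℝ))^j
          = ∑ m ∈ range (j+1), (c+(k:ℝ))^m * (j.choose m : ℝ) := by
        intro k
        have h := add_pow (c+(k:ℝ)) 1 j
        simp only [one_pow, mul_one] at h
        rw [show (c+1)+(k:ℝ) = (c+(k:ℝ)) + 1 from by ring, h]
      have swap : ∑ k ∈ range (j+1), (-1:ℝ)^k * (j.choose k) * ((c+1)+k)^j
          = ∑ m ∈ range (j+1), (j.choose m : ℝ) *
              (∑ k ∈ range (j+1), (-1:ℝ)^k * (j.choose k) * (c+k)^m) := by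
        simp_rw [expand, Finset.mul_sum]
        rw [Finset.sum_comm]
        refine Finset.sum_congr rfl fun m _ => ?_
        refine Finset.sum_congr rfl fun k _ => ?_
        ring
      have hsplit : ∑ m ∈ range (j+1), (j.choose m : ℝ) *
              (∑ k ∈ range (j+1), (-1:ℝ)^k * (j.choose k) * (c+k)^m)
          = ∑ k ∈ range (j+1), (-1:ℝ)^k * (j.choose k) * (c+k)^j := by
        rw [Finset.sum_range_succ]
        have hz : ∑ m ∈ range j, (j.choose m : ℝ) *
            (∑ k ∈ range (j+1), (-1:ℝ)^k * (j.choose k) * (c+k)^m) = 0 := by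
          apply Finset.sum_eq_zero
          intro m hm
          rw [ih m (Finset.mem_range.mp hm) c, mul_zero]
        rw [hz, Nat.choose_self]
        push_cast
        ring
      rw [swap, hsplit]
      ring

lemma choose_mul_sub {n j : ℕ} (h : j ≤ n) :
    (n+1-j) * ((n+1).choose j) = (n+1) * n.choose j := by
  have h1 := Nat.add_one_mul_choose_eq n (n-j)
  rw [Nat.choose_symm h] at h1
  rw [show n - j + 1 = n + 1 - j from by omega] at h1
  rw [Nat.choose_symm (le_trans h (Nat.le_succ n))] at h1
  rw [Nat.mul_comm]
  exact h1.symm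

lemma eq_of_hasDerivAt_eq {f g d : ℝ → ℝ}
    (hf : ∀ y, HasDerivAt f (d y) y) (hg : ∀ y, HasDerivAt g (d y) y)
    {y₀ : ℝ} (h0 : f y₀ = g y₀) (y : ℝ) : f y = g y := by
  have hdiff : Differentiable ℝ (fun y => f y - g y) :=
    fun y => ((hf y).sub (hg y)).differentiableAt
  have hz : ∀ y, deriv (fun y => f y - g y) y = 0 := fun y => by
    rw [show (fun y => f y - g y) = f - g from rfl, ((hf y).sub (hg y)).deriv]; ring
  have := is_const_of_deriv_eq_zero hdiff hz y y₀
  linarith [this, h0]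

lemma abel (n : ℕ) (x : ℝ) : ∀ y : ℝ,
    (x + y + n)^n = (y + n)^n + ∑ k ∈ range n,
      ((n.choose (k+1) : ℝ)) * (x * (x + (↑(k+1):ℝ))^k
        * (y + ((n - (k+1) : ℕ):ℝ))^(n - (k+1))) := by
  induction n with
  | zero => intro y; simp
  | succ n ih =>
    have hf : ∀ y : ℝ, HasDerivAt (fun y => (x + y + (↑(n+1):ℝ))^(n+1))
        ((↑(n+1):ℝ)*(x+y+(↑(n+1):ℝ))^n * 1) y := by
      intro y
      have h1 : HasDerivAt (fun y : ℝ => x + y + (↑(n+1):ℝ)) 1 y := by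
        simpa using ((hasDerivAt_id y).const_add x).add_const (↑(n+1):ℝ)
      exact h1.pow (n+1)
    have hgraw : ∀ y : ℝ, HasDerivAt (fun y => (y + (↑(n+1):ℝ))^(n+1) +
        ∑ k ∈ range (n+1), (((n+1).choose (k+1) : ℕ):ℝ) * (x * (x + (↑(k+1):ℝ))^k
          * (y + (((n+1) - (k+1) : ℕ):ℝ))^((n+1) - (k+1))))
        ((↑(n+1):ℝ)*(y+(↑(n+1):ℝ))^n * 1 +
          ∑ k ∈ range (n+1), (((n+1).choose (k+1) : ℕ):ℝ) * ((x * (x + (↑(k+1):ℝ))^k)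
            * ((↑((n+1)-(k+1)):ℝ) * (y + (((n+1) - (k+1) : ℕ):ℝ))^((n+1)-(k+1)-1) * 1))) y := by
      intro y
      have h1 : HasDerivAt (fun y : ℝ => (y + (↑(n+1):ℝ))^(n+1))
          ((↑(n+1):ℝ)*(y+(↑(n+1):ℝ))^n * 1) y :=
        ((hasDerivAt_id y).add_const (↑(n+1):ℝ)).pow (n+1)
      refine h1.add (HasDerivAt.fun_sum fun k _ => ?_)
      have h2 : HasDerivAt (fun y : ℝ => (y + (((n+1) - (k+1) : ℕ):ℝ))^((n+1)-(k+1)))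
          ((↑((n+1)-(k+1)):ℝ) * (y + (((n+1) - (k+1) : ℕ):ℝ))^((n+1)-(k+1)-1) * 1) y :=
        ((hasDerivAt_id y).add_const _).pow _
      have h3 := (h2.const_mul (x * (x + (↑(k+1):ℝ))^k)).const_mul (((n+1).choose (k+1) : ℕ):ℝ)
      convert h3 using 2
    have halg : ∀ y : ℝ, (↑(n+1):ℝ)*(y+(↑(n+1):ℝ))^n * 1 +
          ∑ k ∈ range (n+1), (((n+1).choose (k+1) : ℕ):ℝ) * ((x * (x + (↑(k+1):ℝ))^k)
            * ((↑((n+1)-(k+1)):ℝ) * (y + (((n+1) - (k+1) : ℕ):ℝ))^((n+1)-(k+1)-1) * 1))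
        = (↑(n+1):ℝ)*(x+y+(↑(n+1):ℝ))^n * 1 := by
      intro y
      rw [Finset.sum_range_succ]
      have hlast : (((n+1).choose (n+1) : ℕ):ℝ) * ((x * (x + (↑(n+1):ℝ))^n)
          * ((↑((n+1)-(n+1)):ℝ) * (y + (((n+1) - (n+1) : ℕ):ℝ))^((n+1)-(n+1)-1) * 1)) = 0 := by
        simp [Nat.sub_self]
      rw [hlast, add_zero]
      have hterm : ∀ k ∈ range n, (((n+1).choose (k+1) : ℕ):ℝ) * ((x * (x + (↑(k+1):ℝ))^k)
            * ((↑((n+1)-(k+1)):ℝ) * (y + (((n+1) - (k+1) : ℕ):ℝ))^((n+1)-(k+1)-1) * 1))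
          = (↑(n+1):ℝ) * ((n.choose (k+1) : ℝ) * (x * (x + (↑(k+1):ℝ))^k
            * ((y+1) + ((n - (k+1) : ℕ):ℝ))^(n - (k+1)))) := by
        intro k hk
        have hk' : k < n := Finset.mem_range.mp hk
        have he1 : (n+1) - (k+1) = n - k := by omega
        have he2 : (n+1) - (k+1) - 1 = n - (k+1) := by omega
        have hb : (y + ((((n+1) - (k+1)) : ℕ):ℝ)) = (y+1) + ((n - (k+1) : ℕ):ℝ) := by
          rw [he1]
          rw [Nat.cast_sub hk'.le, Nat.cast_sub (by omega : k+1 ≤ n)]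
          push_cast
          ring
        have hc : ((((n+1)-(k+1)):ℕ):ℝ) * (((n+1).choose (k+1) : ℕ):ℝ)
            = ((n+1:ℕ):ℝ) * (n.choose (k+1) : ℝ) := by
          rw [← Nat.cast_mul, ← Nat.cast_mul]
          exact_mod_cast congrArg (Nat.cast (R := ℝ)) (choose_mul_sub (by omega : k+1 ≤ n))
        rw [hb, he2, he1]
        rw [he1] at hc
        linear_combination (x * (x + (↑(k+1):ℝ))^k
          * ((y+1) + ((n - (k+1) : ℕ):ℝ))^(n - (k+1))) * hc
      rw [Finset.sum_congr rfl hterm, ← Finset.mul_sum]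
      have hih := ih (y+1)
      have e1 : (x + (y+1) + (↑n:ℝ)) = x + y + (↑(n+1):ℝ) := by push_cast; ring
      have e2 : ((y+1) + (↑n:ℝ)) = y + (↑(n+1):ℝ) := by push_cast; ring
      rw [e1, e2] at hih
      rw [show ∑ k ∈ range n, ((n.choose (k+1) : ℝ) * (x * (x + (↑(k+1):ℝ))^k
            * ((y+1) + ((n - (k+1) : ℕ):ℝ))^(n - (k+1))))
          = (x + y + (↑(n+1):ℝ))^n - (y + (↑(n+1):ℝ))^n from by linarith [hih]]
      ring
    -- now conclude: both sides have the same derivative; evaluate at y₀ = -x - (n+1)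
    set y₀ : ℝ := -x - (↑(n+1):ℝ) with hy₀
    have hg : ∀ y : ℝ, HasDerivAt (fun y => (y + (↑(n+1):ℝ))^(n+1) +
        ∑ k ∈ range (n+1), (((n+1).choose (k+1) : ℕ):ℝ) * (x * (x + (↑(k+1):ℝ))^k
          * (y + (((n+1) - (k+1) : ℕ):ℝ))^((n+1) - (k+1))))
        ((↑(n+1):ℝ)*(x+y+(↑(n+1):ℝ))^n * 1) y := by
      intro y
      have := hgraw y
      rwa [halg y] at this
    have h0 : (fun y => (x + y + (↑(n+1):ℝ))^(n+1)) y₀ =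
        (fun y => (y + (↑(n+1):ℝ))^(n+1) +
        ∑ k ∈ range (n+1), (((n+1).choose (k+1) : ℕ):ℝ) * (x * (x + (↑(k+1):ℝ))^k
          * (y + (((n+1) - (k+1) : ℕ):ℝ))^((n+1) - (k+1)))) y₀ := by
      simp only [hy₀]
      have hL : (x + (-x - (↑(n+1):ℝ)) + (↑(n+1):ℝ))^(n+1) = 0 := by
        rw [show x + (-x - (↑(n+1):ℝ)) + (↑(n+1):ℝ) = 0 from by ring]
        exact zero_pow (Nat.succ_ne_zero n)
      rw [hL]
      have hz := alt_sum (n+1) n (Nat.lt_succ_self n) x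
      rw [Finset.sum_range_succ' (fun k => (-1:ℝ)^k * (((n+1).choose k : ℕ):ℝ) * (x+(k:ℝ))^n) (n+1)] at hz
      -- hz : ∑ k ∈ range (n+1), (-1)^(k+1) * C(n+1,k+1) * (x+↑(k+1))^n + 1*C(n+1,0)*(x+0)^n = 0
      have hterm : ∀ k ∈ range (n+1),
          (((n+1).choose (k+1) : ℕ):ℝ) * (x * (x + (↑(k+1):ℝ))^k
            * ((-x - (↑(n+1):ℝ)) + (((n+1) - (k+1) : ℕ):ℝ))^((n+1) - (k+1)))
          = x * (-1:ℝ)^(n+1) * ((-1:ℝ)^(k+1) * (((n+1).choose (k+1) : ℕ):ℝ) * (x+(↑(k+1):ℝ))^n) := by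
        intro k hk
        have hk' : k < n+1 := Finset.mem_range.mp hk
        have hb : ((-x - (↑(n+1):ℝ)) + (((n+1) - (k+1) : ℕ):ℝ)) = -(x + (↑(k+1):ℝ)) := by
          rw [Nat.cast_sub (by omega : k+1 ≤ n+1)]
          push_cast
          ring
        rw [hb, neg_pow]
        have hpow : (x + (↑(k+1):ℝ))^k * (x + (↑(k+1):ℝ))^((n+1)-(k+1)) = (x + (↑(k+1):ℝ))^n := by
          rw [← pow_add]
          congr 1
          omega
        have hpar : (-1:ℝ)^((n+1)-(k+1)) = (-1:ℝ)^(n+1) * (-1:ℝ)^(k+1) := by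
          rw [← pow_add, neg_one_pow_eq_pow_mod_two,
            neg_one_pow_eq_pow_mod_two (n := n+1+(k+1))]
          congr 1
          omega
        calc (((n+1).choose (k+1) : ℕ):ℝ) * (x * (x + (↑(k+1):ℝ))^k
              * ((-1:ℝ)^((n+1)-(k+1)) * (x + (↑(k+1):ℝ))^((n+1)-(k+1))))
            = (-1:ℝ)^((n+1)-(k+1)) * (((n+1).choose (k+1) : ℕ):ℝ) * x *
              ((x + (↑(k+1):ℝ))^k * (x + (↑(k+1):ℝ))^((n+1)-(k+1))) := by ring
          _ = x * (-1:ℝ)^(n+1) * ((-1:ℝ)^(k+1) * (((n+1).choose (k+1) : ℕ):ℝ) * (x+(↑(k+1):ℝ))^n) := by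
              rw [hpow, hpar]; ring
      rw [Finset.sum_congr rfl hterm, ← Finset.mul_sum]
      have hS : ∑ k ∈ range (n+1), ((-1:ℝ)^(k+1) * (((n+1).choose (k+1) : ℕ):ℝ) * (x+(↑(k+1):ℝ))^n)
          = - x^n := by
        have : ((-1:ℝ)^0 * (((n+1).choose 0 : ℕ):ℝ) * (x+((0:ℕ):ℝ))^n) = x^n := by simp
        linarith [hz, this]
      rw [hS]
      have hneg : ((-x - (↑(n+1):ℝ)) + (↑(n+1):ℝ))^(n+1) = (-1:ℝ)^(n+1) * x^(n+1) := by
        rw [show (-x - (↑(n+1):ℝ)) + (↑(n+1):ℝ) = -x from by ring, neg_pow]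
      rw [hneg]
      ring
    intro y
    exact eq_of_hasDerivAt_eq hf hg h0 y

lemma identity_II (n : ℕ) (hn : 1 ≤ n) :
    ((n:ℝ))^n = ∑ k ∈ range n,
      (n.choose (k+1) : ℝ) * ((↑(k+1):ℝ))^k * (((n - (k+1) : ℕ)):ℝ)^(n-(k+1)) := by
  have hF : HasDerivAt (fun x : ℝ => (x + 0 + (n:ℝ))^n)
      ((n:ℝ) * ((0:ℝ) + 0 + (n:ℝ))^(n-1) * 1) 0 :=
    (((hasDerivAt_id (0:ℝ)).add_const (0:ℝ)).add_const (n:ℝ)).pow n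
  have hG : HasDerivAt (fun x : ℝ => ((0:ℝ) + (n:ℝ))^n + ∑ k ∈ range n,
        (n.choose (k+1) : ℝ) * (x * (x + (↑(k+1):ℝ))^k
          * ((0:ℝ) + ((n - (k+1) : ℕ):ℝ))^(n-(k+1))))
      (∑ k ∈ range n, (n.choose (k+1) : ℝ) * ((↑(k+1):ℝ))^k
          * (((n - (k+1) : ℕ)):ℝ)^(n-(k+1))) 0 := by
    apply HasDerivAt.const_add
    apply HasDerivAt.fun_sum
    intro k _
    have h1 : HasDerivAt (fun x : ℝ => x * (x + (↑(k+1):ℝ))^k) ((↑(k+1):ℝ)^k) 0 := by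
      have h := (hasDerivAt_id (0:ℝ)).mul
        (((hasDerivAt_id (0:ℝ)).add_const ((↑(k+1)):ℝ)).pow k)
      refine h.congr_deriv ?_
      simp
    have h2 := (h1.mul_const (((0:ℝ) + ((n - (k+1) : ℕ):ℝ))^(n-(k+1)))).const_mul
      ((n.choose (k+1) : ℝ))
    refine h2.congr_deriv ?_
    rw [zero_add]
    ring
  have hFG : (fun x : ℝ => (x + 0 + (n:ℝ))^n) = (fun x : ℝ => ((0:ℝ) + (n:ℝ))^n +
      ∑ k ∈ range n, (n.choose (k+1) : ℝ) * (x * (x + (↑(k+1):ℝ))^k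
        * ((0:ℝ) + ((n - (k+1) : ℕ):ℝ))^(n-(k+1)))) := by
    funext x
    exact abel n x 0
  rw [hFG] at hF
  have huniq := hF.unique hG
  rw [← huniq]
  have : ((0:ℝ) + 0 + (n:ℝ)) = (n:ℝ) := by ring
  rw [this, mul_one, ← pow_succ']
  congr 1
  omega

/-- Unnormalized Abel coefficients: `Ahat a 0 = 1`, `Ahat a k = a * (a+k)^(k-1)`. -/
noncomputable def Ahat (a : ℝ) : ℕ → ℝ
  | 0 => 1
  | (k+1) => a * (a + (↑(k+1):ℝ))^k

lemma sum1 (n : ℕ) (a b : ℝ) :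
    ∑ k ∈ range (n+1), (n.choose k : ℝ) * Ahat a k * (b+((n-k:ℕ):ℝ))^(n-k)
      = (a+b+(n:ℝ))^n := by
  calc ∑ k ∈ range (n+1), (n.choose k : ℝ) * Ahat a k * (b+((n-k:ℕ):ℝ))^(n-k)
      = (b+(n:ℝ))^n + ∑ k ∈ range n,
          (n.choose (k+1) : ℝ) * (a * (a + (↑(k+1):ℝ))^k
            * (b + ((n - (k+1) : ℕ):ℝ))^(n - (k+1))) := by
        rw [Finset.sum_range_succ'
          (fun k => (n.choose k : ℝ) * Ahat a k * (b+((n-k:ℕ):ℝ))^(n-k)) n]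
        rw [add_comm]
        congr 1
        · simp [Ahat]
        · refine Finset.sum_congr rfl fun k _ => ?_
          simp only [Ahat]
          ring
    _ = (a+b+(n:ℝ))^n := (abel n a b).symm

lemma sum2 (n : ℕ) (a b : ℝ) :
    ∑ k ∈ range (n+1+1), ((n+1).choose k : ℝ) * Ahat a k *
      ((((n+1-k:ℕ)):ℝ) * (b+((n+1-k:ℕ):ℝ))^(n+1-k-1))
    = (↑(n+1):ℝ) * (a+(b+1)+(n:ℝ))^n := by
  rw [Finset.sum_range_succ' (fun k => ((n+1).choose k : ℝ) * Ahat a k *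
      ((((n+1-k:ℕ)):ℝ) * (b+((n+1-k:ℕ):ℝ))^(n+1-k-1))) (n+1)]
  have h0 : ((n+1).choose 0 : ℝ) * Ahat a 0 *
      ((((n+1-0:ℕ)):ℝ) * (b+((n+1-0:ℕ):ℝ))^(n+1-0-1))
      = (↑(n+1):ℝ) * ((b+1)+(n:ℝ))^n := by
    simp only [Nat.sub_zero, Nat.choose_zero_right, Ahat]
    push_cast
    ring_nf
  rw [h0]
  rw [Finset.sum_range_succ]
  have hlast : ((n+1).choose (n+1) : ℝ) * Ahat a (n+1) *
      ((((n+1-(n+1):ℕ)):ℝ) * (b+((n+1-(n+1):ℕ):ℝ))^(n+1-(n+1)-1)) = 0 := by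
    simp [Nat.sub_self]
  rw [hlast, add_zero]
  have hterm : ∀ k ∈ range n, ((n+1).choose (k+1) : ℝ) * Ahat a (k+1) *
      ((((n+1-(k+1):ℕ)):ℝ) * (b+((n+1-(k+1):ℕ):ℝ))^(n+1-(k+1)-1))
      = (↑(n+1):ℝ) * ((n.choose (k+1) : ℝ) * (a * (a + (↑(k+1):ℝ))^k
          * ((b+1) + ((n - (k+1) : ℕ):ℝ))^(n - (k+1)))) := by
    intro k hk
    have hk' : k < n := Finset.mem_range.mp hk
    have he1 : n + 1 - (k+1) = n - k := by omega
    have he2 : n + 1 - (k+1) - 1 = n - (k+1) := by omega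
    have hb : (b + ((n+1-(k+1):ℕ):ℝ)) = (b+1) + ((n - (k+1) : ℕ):ℝ) := by
      rw [he1, Nat.cast_sub hk'.le, Nat.cast_sub (by omega : k+1 ≤ n)]
      push_cast
      ring
    have hc : (((n+1-(k+1)):ℕ):ℝ) * (((n+1).choose (k+1) : ℕ):ℝ)
        = (((n+1):ℕ):ℝ) * ((n.choose (k+1) : ℕ):ℝ) := by
      rw [← Nat.cast_mul, ← Nat.cast_mul]
      exact_mod_cast congrArg (Nat.cast (R := ℝ)) (choose_mul_sub (by omega : k+1 ≤ n))
    rw [hb, he2]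
    simp only [Ahat]
    linear_combination (a * (a + (↑(k+1):ℝ))^k
      * ((b+1) + ((n - (k+1) : ℕ):ℝ))^(n - (k+1))) * hc
  rw [Finset.sum_congr rfl hterm, ← Finset.mul_sum]
  rw [show ∑ k ∈ range n, ((n.choose (k+1) : ℝ) * (a * (a + (↑(k+1):ℝ))^k
          * ((b+1) + ((n - (k+1) : ℕ):ℝ))^(n - (k+1))))
      = (a+(b+1)+(n:ℝ))^n - ((b+1)+(n:ℝ))^n from by linarith [abel n a (b+1)]]
  ring

lemma conv_Ahat (n : ℕ) (a b : ℝ) :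
    ∑ k ∈ range (n+1), (n.choose k : ℝ) * Ahat a k * Ahat b (n-k) = Ahat (a+b) n := by
  cases n with
  | zero => simp [Ahat]
  | succ m =>
    have split : ∀ j : ℕ, Ahat b j = (b+(j:ℝ))^j - (j:ℝ)*(b+(j:ℝ))^(j-1) := by
      intro j
      cases j with
      | zero => simp [Ahat]
      | succ i =>
        simp only [Ahat, Nat.add_sub_cancel]
        rw [pow_succ]
        push_cast
        ring
    calc ∑ k ∈ range (m+1+1), ((m+1).choose k : ℝ) * Ahat a k * Ahat b (m+1-k)
        = ∑ k ∈ range (m+1+1), (((m+1).choose k : ℝ) * Ahat a k * (b+((m+1-k:ℕ):ℝ))^(m+1-k)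
            - ((m+1).choose k : ℝ) * Ahat a k *
              ((((m+1-k:ℕ)):ℝ) * (b+((m+1-k:ℕ):ℝ))^(m+1-k-1))) := by
          refine Finset.sum_congr rfl fun k _ => ?_
          rw [split (m+1-k)]
          ring
      _ = (a+b+(↑(m+1):ℝ))^(m+1) - (↑(m+1):ℝ) * (a+(b+1)+(m:ℝ))^m := by
          rw [Finset.sum_sub_distrib, sum1 (m+1) a b, sum2 m a b]
      _ = Ahat (a+b) (m+1) := by
          have hb : (a+(b+1)+(m:ℝ)) = (a+b+(↑(m+1):ℝ)) := by push_cast; ring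
          rw [hb]
          simp only [Ahat]
          rw [pow_succ]
          push_cast
          ring

noncomputable def That : ℕ → ℝ
  | 0 => 0
  | (k+1) => ((k+1:ℕ):ℝ)^k

noncomputable def tc (n : ℕ) : ℝ := That n / n.factorial

noncomputable def uc (n : ℕ) : ℝ := ((n:ℕ):ℝ)^n / n.factorial

noncomputable def Ac (a : ℝ) (n : ℕ) : ℝ := Ahat a n / n.factorial

lemma conv_div {n : ℕ} {P Q : ℕ → ℝ} {R : ℝ}
    (h : ∑ k ∈ range (n+1), (n.choose k : ℝ) * P k * Q (n-k) = R) :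
    ∑ k ∈ range (n+1), (P k / k.factorial) * (Q (n-k) / (n-k).factorial)
      = R / n.factorial := by
  rw [← h, Finset.sum_div]
  refine Finset.sum_congr rfl fun k hk => ?_
  have hk' : k ≤ n := Nat.lt_succ_iff.mp (Finset.mem_range.mp hk)
  rw [Nat.cast_choose ℝ hk']
  have h1 : (k.factorial : ℝ) ≠ 0 := Nat.cast_ne_zero.mpr (Nat.factorial_ne_zero _)
  have h2 : ((n-k).factorial : ℝ) ≠ 0 := Nat.cast_ne_zero.mpr (Nat.factorial_ne_zero _)
  have h3 : (n.factorial : ℝ) ≠ 0 := Nat.cast_ne_zero.mpr (Nat.factorial_ne_zero _)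
  field_simp

/-- normalized form of identity II : `uc n = ∑ tc k * uc (n-k)` for `n ≥ 1`. -/
lemma conv_tc_uc {n : ℕ} (hn : 1 ≤ n) :
    ∑ k ∈ range (n+1), tc k * uc (n-k) = uc n := by
  have hh : ∑ k ∈ range (n+1), (n.choose k : ℝ) * That k * (((n-k:ℕ)):ℝ)^(n-k)
      = ((n:ℝ))^n := by
    rw [Finset.sum_range_succ'
      (fun k => (n.choose k : ℝ) * That k * (((n-k:ℕ)):ℝ)^(n-k)) n]
    have h0 : (n.choose 0 : ℝ) * That 0 * (((n-0:ℕ)):ℝ)^(n-0) = 0 := by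
      simp [That]
    rw [h0, add_zero]
    simp only [That]
    exact (identity_II n hn).symm
  have := conv_div (P := That) (Q := fun j => ((j:ℕ):ℝ)^j) hh
  simpa [tc, uc] using this

/-- normalized multiplicativity coefficients. -/
lemma conv_Ac (n : ℕ) (a b : ℝ) :
    ∑ k ∈ range (n+1), Ac a k * Ac b (n-k) = Ac (a+b) n := by
  have := conv_div (P := Ahat a) (Q := Ahat b) (conv_Ahat n a b)
  simpa [Ac] using this

/-- normalized (I) at y = 0 : `∑ Ac a k * uc (n-k) = (a+n)^n/n!`. -/
lemma conv_Ac_uc (n : ℕ) (a : ℝ) :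
    ∑ k ∈ range (n+1), Ac a k * uc (n-k) = (a+(n:ℝ))^n / n.factorial := by
  have hh := sum1 n a 0
  simp only [zero_add, add_zero] at hh
  have := conv_div (P := Ahat a) (Q := fun j => ((j:ℕ):ℝ)^j) hh
  simpa [Ac, uc] using this

lemma fact_cast_pos (n : ℕ) : (0:ℝ) < (n.factorial : ℝ) :=
  Nat.cast_pos.mpr n.factorial_pos

lemma tc_nonneg (n : ℕ) : 0 ≤ tc n := by
  cases n <;> · simp only [tc, That]; positivity

lemma uc_nonneg (n : ℕ) : 0 ≤ uc n := by simp only [uc]; positivity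

lemma Ahat_nonneg {a : ℝ} (ha : 0 ≤ a) (n : ℕ) : 0 ≤ Ahat a n := by
  cases n <;> · simp only [Ahat]; positivity

lemma Ac_nonneg {a : ℝ} (ha : 0 ≤ a) (n : ℕ) : 0 ≤ Ac a n := by
  simp only [Ac]
  exact div_nonneg (Ahat_nonneg ha n) (fact_cast_pos n).le

lemma tc_le_uc (n : ℕ) : tc n ≤ uc n := by
  cases n with
  | zero => simp [tc, uc, That]
  | succ m =>
    simp only [tc, uc, That]
    gcongr
    · exact_mod_cast Nat.one_le_cast.mpr (Nat.succ_le_succ (Nat.zero_le m))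
    · omega

lemma uc_le_exp (n : ℕ) : uc n ≤ Real.exp 1 ^ n := by
  simp only [uc]
  rw [Real.exp_one_pow]
  rw [div_le_iff₀ (fact_cast_pos n)]
  have h1 : ((n:ℝ))^n / n.factorial ≤ Real.exp n := by
    refine le_trans ?_ (Real.sum_le_exp_of_nonneg (Nat.cast_nonneg n) (n+1))
    have := Finset.single_le_sum (f := fun i => ((n:ℝ))^i / i.factorial)
      (fun i _ => by positivity) (Finset.self_mem_range_succ n)
    simpa using this
  calc ((n:ℝ))^n = ((n:ℝ))^n / n.factorial * n.factorial := by
        field_simp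
    _ ≤ Real.exp n * n.factorial := by
        apply mul_le_mul_of_nonneg_right h1 (fact_cast_pos n).le

lemma nmul_tc (n : ℕ) : ((n+1:ℕ):ℝ) * tc (n+1) = uc (n+1) := by
  simp only [tc, uc, That]
  rw [pow_succ ((((n+1):ℕ)):ℝ) n]
  field_simp

lemma add_pow_le_exp_mul {c : ℝ} (hc : 0 ≤ c) {m n : ℕ} (hnm : n ≤ m) :
    (c + (m:ℝ))^n ≤ ((m:ℝ))^n * Real.exp c := by
  rcases Nat.eq_zero_or_pos m with hm | hm
  · subst hm
    interval_cases n
    simpa using Real.one_le_exp hc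
  · have hm' : (0:ℝ) < m := Nat.cast_pos.mpr hm
    have h1 : c + (m:ℝ) ≤ (m:ℝ) * Real.exp (c/m) := by
      have := Real.add_one_le_exp (c/(m:ℝ))
      calc c + (m:ℝ) = (m:ℝ) * (c/(m:ℝ) + 1) := by field_simp
        _ ≤ (m:ℝ) * Real.exp (c/m) := by
            apply mul_le_mul_of_nonneg_left this hm'.le
    calc (c + (m:ℝ))^n ≤ ((m:ℝ) * Real.exp (c/m))^n := by
          apply pow_le_pow_left₀ (by positivity) h1
      _ = ((m:ℝ))^n * Real.exp (c/m * n) := by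
          rw [mul_pow, ← Real.exp_nat_mul]
          ring_nf
      _ ≤ ((m:ℝ))^n * Real.exp c := by
          gcongr
          calc c / (m:ℝ) * n ≤ c / (m:ℝ) * m := by
                apply mul_le_mul_of_nonneg_left (Nat.cast_le.mpr hnm) (by positivity)
            _ = c := by field_simp

lemma Ahat_le_pow {a : ℝ} (ha : 0 ≤ a) (n : ℕ) : Ahat a n ≤ (a + (n:ℝ))^n := by
  cases n with
  | zero => simp [Ahat]
  | succ m =>
    simp only [Ahat]
    rw [pow_succ (a + ((m+1:ℕ):ℝ)) m]
    have h1 : a ≤ a + (↑(m+1):ℝ) := le_add_of_nonneg_right (by positivity)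
    have hp : (0:ℝ) ≤ (a + (↑(m+1):ℝ))^m := by positivity
    calc a * (a + (↑(m+1):ℝ))^m = (a + (↑(m+1):ℝ))^m * a := by ring
      _ ≤ (a + (↑(m+1):ℝ))^m * (a + (↑(m+1):ℝ)) := mul_le_mul_of_nonneg_left h1 hp

lemma Ac_le_exp {a : ℝ} (ha : 0 ≤ a) (n : ℕ) :
    Ac a n ≤ Real.exp a * Real.exp 1 ^ n := by
  have h1 : Ac a n ≤ (a + (n:ℝ))^n / n.factorial := by
    simp only [Ac]
    gcongr
    exact Ahat_le_pow ha n
  have h3 : (a + (n:ℝ))^n ≤ ((n:ℝ))^n * Real.exp a := add_pow_le_exp_mul ha le_rfl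
  have h4 := uc_le_exp n
  calc Ac a n ≤ (a + (n:ℝ))^n / n.factorial := h1
    _ ≤ (((n:ℝ))^n * Real.exp a) / n.factorial := by gcongr
    _ = Real.exp a * (((n:ℝ))^n / n.factorial) := by ring
    _ ≤ Real.exp a * Real.exp 1 ^ n := by
        apply mul_le_mul_of_nonneg_left _ (Real.exp_pos a).le
        simpa [uc] using h4

lemma summable_geom_mul {q : ℝ} (hq0 : 0 ≤ q) (hq : q < 1) (C : ℝ) :
    Summable (fun n : ℕ => C * q^n) :=
  (summable_geometric_of_lt_one hq0 hq).mul_left C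

lemma ew_lt_one {l : ℝ} (hl0 : 0 ≤ l) (hl1 : l < 1) :
    Real.exp 1 * (l * Real.exp (-l)) < 1 := by
  rcases eq_or_lt_of_le hl0 with h | h
  · rw [← h]; simpa using Real.exp_pos 1
  · have hlog := Real.log_lt_sub_one_of_pos h (ne_of_lt hl1)
    have : Real.exp 1 * (l * Real.exp (-l)) = Real.exp (Real.log l + (1 - l)) := by
      rw [Real.exp_add, Real.exp_log h, Real.exp_sub]
      rw [Real.exp_neg]
      field_simp
    rw [this]
    calc Real.exp (Real.log l + (1 - l)) < Real.exp 0 :=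
          Real.exp_lt_exp.mpr (by linarith)
      _ = 1 := Real.exp_zero

noncomputable def fB (x : ℝ) : ℝ := ∑' n, tc n * (x * Real.exp (-x))^n
noncomputable def FB (x : ℝ) : ℝ := ∑' n, uc n * (x * Real.exp (-x))^n

lemma w_nonneg {l : ℝ} (hl0 : 0 ≤ l) : 0 ≤ l * Real.exp (-l) :=
  mul_nonneg hl0 (Real.exp_pos _).le

lemma summable_norm_coeff {c : ℕ → ℝ} {l : ℝ} (hl0 : 0 ≤ l) (hl1 : l < 1) (C : ℝ)
    (hc : ∀ n, |c n| ≤ C * Real.exp 1 ^ n) :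
    Summable fun n => ‖c n * (l * Real.exp (-l))^n‖ := by
  have hq0 : 0 ≤ Real.exp 1 * (l * Real.exp (-l)) :=
    mul_nonneg (Real.exp_pos 1).le (w_nonneg hl0)
  apply Summable.of_nonneg_of_le (fun n => norm_nonneg _) (fun n => ?_)
    ((summable_geometric_of_lt_one hq0 (ew_lt_one hl0 hl1)).mul_left C)
  rw [norm_mul, norm_pow, Real.norm_eq_abs, Real.norm_eq_abs,
    abs_of_nonneg (w_nonneg hl0)]
  calc |c n| * (l * Real.exp (-l)) ^ n ≤ (C * Real.exp 1 ^ n) * (l * Real.exp (-l)) ^n := by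
        apply mul_le_mul_of_nonneg_right (hc n) (by positivity)
    _ = C * (Real.exp 1 * (l * Real.exp (-l)))^n := by rw [mul_pow]; ring

lemma abs_tc_le (n : ℕ) : |tc n| ≤ 1 * Real.exp 1 ^ n := by
  rw [abs_of_nonneg (tc_nonneg n), one_mul]
  exact (tc_le_uc n).trans (uc_le_exp n)

lemma abs_uc_le (n : ℕ) : |uc n| ≤ 1 * Real.exp 1 ^ n := by
  rw [abs_of_nonneg (uc_nonneg n), one_mul]
  exact uc_le_exp n

lemma abs_Ac_le {a : ℝ} (ha : 0 ≤ a) (n : ℕ) : |Ac a n| ≤ Real.exp a * Real.exp 1 ^ n := by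
  rw [abs_of_nonneg (Ac_nonneg ha n)]
  exact Ac_le_exp ha n

lemma summable_norm_tc {l : ℝ} (hl0 : 0 ≤ l) (hl1 : l < 1) :
    Summable fun n => ‖tc n * (l * Real.exp (-l))^n‖ :=
  summable_norm_coeff hl0 hl1 1 abs_tc_le

lemma summable_norm_uc {l : ℝ} (hl0 : 0 ≤ l) (hl1 : l < 1) :
    Summable fun n => ‖uc n * (l * Real.exp (-l))^n‖ :=
  summable_norm_coeff hl0 hl1 1 abs_uc_le

lemma summable_norm_Ac {a l : ℝ} (ha : 0 ≤ a) (hl0 : 0 ≤ l) (hl1 : l < 1) :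
    Summable fun n => ‖Ac a n * (l * Real.exp (-l))^n‖ :=
  summable_norm_coeff hl0 hl1 (Real.exp a) (abs_Ac_le ha)

lemma FB_eq {l : ℝ} (hl0 : 0 ≤ l) (hl1 : l < 1) : FB l = 1 + fB l * FB l := by
  have hn_tc := summable_norm_tc hl0 hl1
  have hn_uc := summable_norm_uc hl0 hl1
  have hsum_uc : Summable (fun n => uc n * (l * Real.exp (-l))^n) := hn_uc.of_norm
  have hprod := tsum_mul_tsum_eq_tsum_sum_range_of_summable_norm hn_tc hn_uc
  have hterm : ∀ n : ℕ, ∑ k ∈ range (n+1),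
      (tc k * (l * Real.exp (-l))^k) * (uc (n-k) * (l * Real.exp (-l))^(n-k))
      = (fun m => if m = 0 then (0:ℝ) else uc m * (l * Real.exp (-l))^m) n := by
    intro n
    have h1 : ∀ k ∈ range (n+1), (tc k * (l * Real.exp (-l))^k)
        * (uc (n-k) * (l * Real.exp (-l))^(n-k))
        = (tc k * uc (n-k)) * (l * Real.exp (-l))^n := by
      intro k hk
      have hk' : k ≤ n := Nat.lt_succ_iff.mp (Finset.mem_range.mp hk)
      rw [show (tc k * (l * Real.exp (-l))^k) * (uc (n-k) * (l * Real.exp (-l))^(n-k))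
        = (tc k * uc (n-k)) * ((l * Real.exp (-l))^k * (l * Real.exp (-l))^(n-k)) from by ring]
      rw [← pow_add]
      congr 2
      omega
    rw [Finset.sum_congr rfl h1, ← Finset.sum_mul]
    cases n with
    | zero => simp [tc, That]
    | succ m =>
      rw [conv_tc_uc (Nat.succ_le_succ (Nat.zero_le m))]
      simp
  have hgsum : Summable (fun m => if m = 0 then (0:ℝ) else uc m * (l * Real.exp (-l))^m) :=
    ((summable_norm_sum_mul_range_of_summable_norm hn_tc hn_uc).of_norm).congr hterm
  have h2 : ∑' m, (if m = 0 then (0:ℝ) else uc m * (l * Real.exp (-l))^m)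
      = FB l - 1 := by
    rw [Summable.tsum_eq_zero_add hgsum]
    have hFB : FB l = 1 + ∑' n, uc (n+1) * (l * Real.exp (-l))^(n+1) := by
      rw [FB, Summable.tsum_eq_zero_add hsum_uc]
      simp [uc]
    rw [hFB]
    simp
  have h3 : fB l * FB l = FB l - 1 := by
    rw [fB, FB, hprod]
    rw [tsum_congr hterm]
    exact h2
  linarith [h3]

lemma fB_nonneg {l : ℝ} (hl0 : 0 ≤ l) (hl1 : l < 1) : 0 ≤ fB l :=
  tsum_nonneg fun n => mul_nonneg (tc_nonneg n) (pow_nonneg (w_nonneg hl0) n)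

lemma FB_ge_one {l : ℝ} (hl0 : 0 ≤ l) (hl1 : l < 1) : 1 ≤ FB l := by
  have hsum_uc : Summable (fun n => uc n * (l * Real.exp (-l))^n) :=
    (summable_norm_uc hl0 hl1).of_norm
  have h := Summable.le_tsum hsum_uc 0 (fun j _ =>
    mul_nonneg (uc_nonneg j) (pow_nonneg (w_nonneg hl0) j))
  simpa [uc, FB] using h

lemma fB_lt_one {l : ℝ} (hl0 : 0 ≤ l) (hl1 : l < 1) : fB l < 1 := by
  have h1 := FB_eq hl0 hl1
  have h2 := FB_ge_one hl0 hl1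
  by_contra h
  push_neg at h
  nlinarith [h1, h2]

lemma FB_shift {l : ℝ} (hl0 : 0 ≤ l) (hl1 : l < 1) :
    (l * Real.exp (-l)) * (∑' n, uc (n+1) * (l*Real.exp (-l))^n) = FB l - 1 := by
  have hsum_uc : Summable (fun n => uc n * (l * Real.exp (-l))^n) :=
    (summable_norm_uc hl0 hl1).of_norm
  rw [← tsum_mul_left]
  have hFB : FB l = 1 + ∑' n, uc (n+1) * (l * Real.exp (-l))^(n+1) := by
    rw [FB, Summable.tsum_eq_zero_add hsum_uc]
    simp [uc]
  rw [hFB]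
  rw [show ∑' n, (l * Real.exp (-l)) * (uc (n+1) * (l*Real.exp (-l))^n)
      = ∑' n, uc (n+1) * (l * Real.exp (-l))^(n+1) from tsum_congr fun n => by
        rw [pow_succ]; ring]
  ring

lemma hasDerivAt_w (x : ℝ) :
    HasDerivAt (fun t : ℝ => t * Real.exp (-t)) ((1-x) * Real.exp (-x)) x := by
  have h1 : HasDerivAt (fun t : ℝ => Real.exp (-t)) (Real.exp (-x) * (-1)) x :=
    (hasDerivAt_neg x).exp
  have h2 := (hasDerivAt_id x).mul h1
  refine h2.congr_deriv ?_
  simp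
  ring

lemma w_mono : StrictMonoOn (fun x : ℝ => x * Real.exp (-x)) (Set.Icc (0:ℝ) 1) := by
  apply strictMonoOn_of_deriv_pos (convex_Icc 0 1)
  · exact (continuous_id.mul (Real.continuous_exp.comp continuous_neg)).continuousOn
  · intro x hx
    rw [interior_Icc] at hx
    rw [(hasDerivAt_w x).deriv]
    have h1 : 0 < 1 - x := by linarith [hx.2]
    positivity

lemma w_le_w {x y : ℝ} (hx : 0 ≤ x) (hxy : x ≤ y) (hy : y ≤ 1) :
    x * Real.exp (-x) ≤ y * Real.exp (-y) := by
  rcases eq_or_lt_of_le hxy with h | h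
  · rw [h]
  · exact (w_mono ⟨hx, hxy.trans hy⟩ ⟨hx.trans hxy, hy⟩ h).le

lemma hasDerivAt_fB {b l : ℝ} (hb0 : 0 < b) (hb1 : b < 1) (hl : l ∈ Set.Ioo 0 b) :
    HasDerivAt fB (((1-l) * Real.exp (-l)) *
      ∑' n, uc (n+1) * (l * Real.exp (-l))^n) l := by
  have hwb0 : 0 < b * Real.exp (-b) := mul_pos hb0 (Real.exp_pos _)
  have hwb1 : b * Real.exp (-b) < 1 := by
    have := ew_lt_one hb0.le hb1
    nlinarith [Real.exp_one_gt_d9, w_nonneg hb0.le]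
  -- the summable bound on derivatives
  set q : ℝ := Real.exp 1 * (b * Real.exp (-b)) with hq
  have hq0 : 0 ≤ q := mul_nonneg (Real.exp_pos 1).le (w_nonneg hb0.le)
  have hq1 : q < 1 := ew_lt_one hb0.le hb1
  set u : ℕ → ℝ := fun n => uc n * (b * Real.exp (-b))^(n-1) with hu_def
  have hu : Summable u := by
    apply Summable.of_nonneg_of_le
      (fun n => mul_nonneg (uc_nonneg n) (pow_nonneg hwb0.le _))
      (fun n => ?_) ((summable_geometric_of_lt_one hq0 hq1).mul_left (1/(b * Real.exp (-b))))
    cases n with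
    | zero =>
      have h00 : uc 0 * (b * Real.exp (-b)) ^ (0 - 1) = 1 := by simp [uc]
      rw [h00, pow_zero, mul_one, le_div_iff₀ hwb0, one_mul]
      exact hwb1.le
    | succ m =>
      have h1 : u (m+1) ≤ Real.exp 1 ^(m+1) * (b*Real.exp (-b))^m := by
        simp only [hu_def, Nat.add_sub_cancel]
        exact mul_le_mul_of_nonneg_right (uc_le_exp (m+1)) (pow_nonneg hwb0.le m)
      calc u (m+1) ≤ Real.exp 1 ^(m+1) * (b*Real.exp (-b))^m := h1
        _ = 1/(b * Real.exp (-b)) * q^(m+1) := by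
            rw [hq, mul_pow]
            field_simp
            ring
  -- derivative of each term
  have hg : ∀ (n : ℕ) (y : ℝ), y ∈ Set.Ioo 0 b →
      HasDerivAt (fun x => tc n * (x * Real.exp (-x))^n)
        (tc n * ((n:ℝ) * (y * Real.exp (-y))^(n-1) * ((1-y) * Real.exp (-y)))) y :=
    fun n y _ => ((hasDerivAt_w y).pow n).const_mul (tc n)
  -- bound on derivatives
  have hg' : ∀ (n : ℕ) (y : ℝ), y ∈ Set.Ioo 0 b →
      ‖tc n * ((n:ℝ) * (y * Real.exp (-y))^(n-1) * ((1-y) * Real.exp (-y)))‖ ≤ u n := by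
    intro n y hy
    have hy0 : 0 < y := hy.1
    have hyb : y < b := hy.2
    have hy1 : y < 1 := hyb.trans hb1
    have hwy0 : 0 ≤ y * Real.exp (-y) := w_nonneg hy0.le
    have hfac : (1-y) * Real.exp (-y) ≤ 1 := by
      have h1 : Real.exp (-y) ≤ 1 := Real.exp_le_one_iff.mpr (by linarith)
      nlinarith [Real.exp_pos (-y)]
    have hfac0 : 0 ≤ (1-y) * Real.exp (-y) :=
      mul_nonneg (by linarith) (Real.exp_pos _).le
    have hnn : 0 ≤ tc n * ((n:ℝ) * (y * Real.exp (-y))^(n-1) * ((1-y) * Real.exp (-y))) :=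
      mul_nonneg (tc_nonneg n) (mul_nonneg (mul_nonneg (Nat.cast_nonneg n)
        (pow_nonneg hwy0 _)) hfac0)
    rw [Real.norm_eq_abs, abs_of_nonneg hnn]
    have hpow : (y * Real.exp (-y))^(n-1) ≤ (b * Real.exp (-b))^(n-1) :=
      pow_le_pow_left₀ hwy0 (w_le_w hy0.le hyb.le hb1.le) _
    cases n with
    | zero =>
      simp only [tc, That, Nat.cast_zero, zero_div, zero_mul]
      exact mul_nonneg (uc_nonneg 0) (pow_nonneg hwb0.le _)
    | succ m =>
      have h2 : tc (m+1) * ((↑(m+1):ℝ) * (y * Real.exp (-y))^m * ((1-y) * Real.exp (-y)))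
          ≤ tc (m+1) * ((↑(m+1):ℝ) * (y * Real.exp (-y))^m * 1) := by
        apply mul_le_mul_of_nonneg_left _ (tc_nonneg _)
        apply mul_le_mul_of_nonneg_left hfac (by positivity)
      have h3 : tc (m+1) * ((↑(m+1):ℝ) * (y * Real.exp (-y))^m * 1)
          = uc (m+1) * (y * Real.exp (-y))^m := by
        rw [← nmul_tc m]
        ring
      have h4 : uc (m+1) * (y * Real.exp (-y))^m ≤ uc (m+1) * (b * Real.exp (-b))^m := by
        apply mul_le_mul_of_nonneg_left _ (uc_nonneg _)
        simpa using hpow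
      simp only [hu_def, Nat.add_sub_cancel]
      push_cast at h2 h3 ⊢
      linarith [h2, h3, h4]
  -- summability at base point b/2
  have hb2 : b/2 ∈ Set.Ioo 0 b := ⟨by linarith, by linarith⟩
  have hg0 : Summable (fun n => tc n * ((b/2) * Real.exp (-(b/2)))^n) :=
    (summable_norm_tc (by linarith) (by linarith)).of_norm
  have := hasDerivAt_tsum_of_isPreconnected hu isOpen_Ioo isPreconnected_Ioo
    hg hg' hb2 hg0 hl
  have heq : (∑' n, tc n * ((n:ℝ) * (l * Real.exp (-l))^(n-1) * ((1-l) * Real.exp (-l))))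
      = ((1-l) * Real.exp (-l)) * ∑' n, uc (n+1) * (l * Real.exp (-l))^n := by
    have hsumd : Summable (fun n => tc n * ((n:ℝ) * (l * Real.exp (-l))^(n-1)
        * ((1-l) * Real.exp (-l)))) := by
      apply Summable.of_norm
      apply Summable.of_nonneg_of_le (fun n => norm_nonneg _) (fun n => hg' n l hl) hu
    rw [Summable.tsum_eq_zero_add hsumd]
    have h0 : tc 0 * ((0:ℕ):ℝ) * ((l * Real.exp (-l))^(0-1) * ((1-l) * Real.exp (-l))) = 0 := by
      simp [tc, That]
    rw [show tc 0 * (((0:ℕ):ℝ) * (l * Real.exp (-l))^(0-1) * ((1-l) * Real.exp (-l))) = 0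
      from by simp [tc, That]]
    rw [zero_add]
    rw [show (∑' n, tc (n+1) * ((↑(n+1):ℝ) * (l * Real.exp (-l))^(n+1-1) * ((1-l) * Real.exp (-l))))
        = ∑' n, ((1-l) * Real.exp (-l)) * (uc (n+1) * (l * Real.exp (-l))^n) from
      tsum_congr fun n => by
        rw [show tc (n+1) * ((↑(n+1):ℝ) * (l * Real.exp (-l))^(n+1-1) * ((1-l) * Real.exp (-l)))
          = ((↑(n+1):ℝ) * tc (n+1)) * (l * Real.exp (-l))^n * ((1-l) * Real.exp (-l)) from by
            simp only [Nat.add_sub_cancel]; ring]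
        rw [nmul_tc n]
        ring]
    rw [tsum_mul_left]
  rw [heq] at this
  exact this

noncomputable def KB (t : ℝ) : ℝ := fB t * Real.exp (t - fB t) / t

lemma hasDerivAt_KB {t : ℝ} (ht : t ∈ Set.Ioo (0:ℝ) 1) : HasDerivAt KB 0 t := by
  obtain ⟨ht0, ht1⟩ := ht
  have hb0 : 0 < (t+1)/2 := by linarith
  have hb1 : (t+1)/2 < 1 := by linarith
  have htb : t < (t+1)/2 := by linarith
  have h1 : HasDerivAt fB (((1-t) * Real.exp (-t)) *
      ∑' n, uc (n+1) * (t * Real.exp (-t))^n) t :=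
    hasDerivAt_fB hb0 hb1 ⟨ht0, htb⟩
  set S := ∑' n, uc (n+1) * (t * Real.exp (-t))^n with hS
  set d := ((1-t) * Real.exp (-t)) * S with hd_def
  set E := Real.exp (t - fB t) with hE
  have hrel1 : (t * Real.exp (-t)) * S = FB t - 1 := FB_shift ht0.le ht1
  have hrel2 : FB t = 1 + fB t * FB t := FB_eq ht0.le ht1
  have hd : t * d = (1-t) * (fB t * FB t) := by
    rw [hd_def]
    calc t * (((1-t) * Real.exp (-t)) * S) = (1-t) * ((t * Real.exp (-t)) * S) := by ring
      _ = (1-t) * (FB t - 1) := by rw [hrel1]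
      _ = (1-t) * (fB t * FB t) := by rw [show FB t - 1 = fB t * FB t from by linarith]
  have h16 : (1 - fB t) * FB t = 1 := by linarith [hrel2]
  have h2 : HasDerivAt (fun x => x - fB x) (1 - d) t := (hasDerivAt_id t).sub h1
  have h3 : HasDerivAt (fun x => Real.exp (x - fB x)) (E * (1 - d)) t := h2.exp
  have h4 : HasDerivAt (fun x => fB x * Real.exp (x - fB x))
      (d * E + fB t * (E * (1 - d))) t := h1.mul h3
  have h5 := h4.div (hasDerivAt_id t) (ne_of_gt ht0)
  simp only [id_eq] at h5
  have h6 : ((d * E + fB t * (E * (1 - d))) * t - fB t * Real.exp (t - fB t) * 1) / t^2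
      = 0 := by
    rw [div_eq_zero_iff]
    left
    rw [hE]
    linear_combination (Real.exp (t - fB t) * (1 - fB t) * (1-t)) * hrel1
      + (Real.exp (t - fB t) * (1-t)) * h16
  rw [h6] at h5
  exact h5

lemma KB_const {a c : ℝ} (ha : 0 < a) (hac : a ≤ c) (hc : c < 1) : KB c = KB a := by
  have hmem : ∀ x ∈ Set.Icc a c, x ∈ Set.Ioo (0:ℝ) 1 := fun x hx =>
    ⟨lt_of_lt_of_le ha hx.1, lt_of_le_of_lt hx.2 hc⟩
  exact constant_of_has_deriv_right_zero
    (fun x hx => (hasDerivAt_KB (hmem x hx)).continuousAt.continuousWithinAt)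
    (fun x hx => (hasDerivAt_KB (hmem x (Set.mem_Icc.mpr ⟨hx.1, hx.2.le⟩))).hasDerivWithinAt)
    c (Set.right_mem_Icc.mpr hac)

noncomputable def Cb : ℝ := ∑' n, tc (n+2) * ((1/2 : ℝ) * Real.exp (-(1/2:ℝ)))^n

lemma Cb_summable : Summable (fun n => tc (n+2) * ((1/2 : ℝ) * Real.exp (-(1/2:ℝ)))^n) := by
  set q : ℝ := Real.exp 1 * ((1/2) * Real.exp (-(1/2:ℝ))) with hq
  have hq0 : 0 ≤ q := mul_nonneg (Real.exp_pos 1).le (w_nonneg (by norm_num))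
  have hq1 : q < 1 := ew_lt_one (by norm_num) (by norm_num)
  apply Summable.of_nonneg_of_le
    (fun n => mul_nonneg (tc_nonneg _) (pow_nonneg (w_nonneg (by norm_num)) _))
    (fun n => ?_) ((summable_geometric_of_lt_one hq0 hq1).mul_left (Real.exp 1 ^2))
  calc tc (n+2) * ((1/2 : ℝ) * Real.exp (-(1/2:ℝ)))^n
      ≤ Real.exp 1 ^ (n+2) * ((1/2 : ℝ) * Real.exp (-(1/2:ℝ)))^n := by
        apply mul_le_mul_of_nonneg_right ((tc_le_uc _).trans (uc_le_exp _))
          (pow_nonneg (w_nonneg (by norm_num)) _)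
    _ = Real.exp 1 ^ 2 * q^n := by
        rw [hq, mul_pow, pow_add]
        ring

lemma Cb_nonneg : 0 ≤ Cb :=
  tsum_nonneg fun n => mul_nonneg (tc_nonneg _) (pow_nonneg (w_nonneg (by norm_num)) _)

lemma fB_bounds {a : ℝ} (ha0 : 0 < a) (ha2 : a ≤ 1/2) :
    a * Real.exp (-a) ≤ fB a ∧ fB a ≤ a * Real.exp (-a) + a^2 * Cb := by
  have ha1 : a < 1 := by linarith
  have hsum : Summable (fun n => tc n * (a * Real.exp (-a))^n) :=
    (summable_norm_tc ha0.le ha1).of_norm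
  constructor
  · have h := Summable.le_tsum hsum 1 (fun j _ =>
      mul_nonneg (tc_nonneg j) (pow_nonneg (w_nonneg ha0.le) j))
    have h1 : tc 1 * (a * Real.exp (-a))^1 = a * Real.exp (-a) := by
      simp [tc, That]
    rw [h1] at h
    exact h
  · have hsum1 : Summable (fun n => tc (n+1) * (a * Real.exp (-a))^(n+1)) :=
      (summable_nat_add_iff (f := fun n => tc n * (a * Real.exp (-a))^n) 1).mpr hsum
    have hsum2 : Summable (fun n => tc (n+2) * (a * Real.exp (-a))^(n+2)) :=
      (summable_nat_add_iff (f := fun n => tc n * (a * Real.exp (-a))^n) 2).mpr hsum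
    have hfa : fB a = tc 1 * (a * Real.exp (-a))^1
        + ∑' n, tc (n+2) * (a * Real.exp (-a))^(n+2) := by
      have e1 : fB a = tc 0 * (a * Real.exp (-a))^0
          + ∑' n, tc (n+1) * (a * Real.exp (-a))^(n+1) := by
        rw [fB]; exact Summable.tsum_eq_zero_add hsum
      have e2 : ∑' n, tc (n+1) * (a * Real.exp (-a))^(n+1)
          = tc (0+1) * (a * Real.exp (-a))^(0+1)
            + ∑' n, tc (n+1+1) * (a * Real.exp (-a))^(n+1+1) := Summable.tsum_eq_zero_add hsum1
      rw [e1, e2, show tc 0 * (a * Real.exp (-a))^0 = 0 from by simp [tc, That], zero_add]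
    have htail : ∑' n, tc (n+2) * (a * Real.exp (-a))^(n+2) ≤ a^2 * Cb := by
      have hle : ∀ n : ℕ, tc (n+2) * (a * Real.exp (-a))^(n+2)
          ≤ a^2 * (tc (n+2) * ((1/2 : ℝ) * Real.exp (-(1/2:ℝ)))^n) := by
        intro n
        have hwa_le_a : a * Real.exp (-a) ≤ a := by
          nlinarith [Real.exp_le_one_iff.mpr (by linarith : -a ≤ 0), Real.exp_pos (-a)]
        have hwa_le_h : a * Real.exp (-a) ≤ (1/2 : ℝ) * Real.exp (-(1/2:ℝ)) :=
          w_le_w ha0.le ha2 (by norm_num)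
        have hw0 : 0 ≤ a * Real.exp (-a) := w_nonneg ha0.le
        calc tc (n+2) * (a * Real.exp (-a))^(n+2)
            = tc (n+2) * ((a * Real.exp (-a))^n * (a * Real.exp (-a))^2) := by
              rw [pow_add]
          _ ≤ tc (n+2) * (((1/2 : ℝ) * Real.exp (-(1/2:ℝ)))^n * a^2) := by
              apply mul_le_mul_of_nonneg_left _ (tc_nonneg _)
              apply mul_le_mul (pow_le_pow_left₀ hw0 hwa_le_h n) (by nlinarith)
                (by positivity) (by positivity)
          _ = a^2 * (tc (n+2) * ((1/2 : ℝ) * Real.exp (-(1/2:ℝ)))^n) := by ring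
      calc ∑' n, tc (n+2) * (a * Real.exp (-a))^(n+2)
          ≤ ∑' n, a^2 * (tc (n+2) * ((1/2 : ℝ) * Real.exp (-(1/2:ℝ)))^n) :=
            Summable.tsum_le_tsum hle hsum2 (Cb_summable.mul_left (a^2))
        _ = a^2 * Cb := by rw [tsum_mul_left, Cb]
    rw [hfa]
    have h1 : tc 1 * (a * Real.exp (-a))^1 = a * Real.exp (-a) := by simp [tc, That]
    rw [h1]
    linarith [htail]

lemma tendsto_fB_div : Filter.Tendsto (fun a => fB a / a)
    (nhdsWithin 0 (Set.Ioi 0)) (nhds 1) := by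
  have hmem : Set.Ioo (0:ℝ) (1/2) ∈ nhdsWithin 0 (Set.Ioi 0) :=
    Ioo_mem_nhdsGT_of_mem (by norm_num : (0:ℝ) ∈ Set.Ico (0:ℝ) (1/2))
  have hlow : Filter.Tendsto (fun a : ℝ => Real.exp (-a))
      (nhdsWithin 0 (Set.Ioi 0)) (nhds 1) := by
    have : Filter.Tendsto (fun a : ℝ => Real.exp (-a)) (nhds 0) (nhds 1) := by
      have := (Real.continuous_exp.comp continuous_neg).tendsto 0
      simpa [Function.comp_def] using this
    exact this.mono_left nhdsWithin_le_nhds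
  have hup : Filter.Tendsto (fun a : ℝ => Real.exp (-a) + a * Cb)
      (nhdsWithin 0 (Set.Ioi 0)) (nhds 1) := by
    have h2 : Filter.Tendsto (fun a : ℝ => a * Cb) (nhds 0) (nhds 0) := by
      have := (continuous_id.mul (continuous_const (y := Cb))).tendsto (0:ℝ)
      simpa [Pi.mul_def] using this
    have := hlow.add (h2.mono_left nhdsWithin_le_nhds)
    simpa using this
  apply tendsto_of_tendsto_of_tendsto_of_le_of_le' hlow hup
  · filter_upwards [hmem] with a ha
    have hb := (fB_bounds ha.1 ha.2.le).1
    rw [le_div_iff₀ ha.1]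
    calc Real.exp (-a) * a = a * Real.exp (-a) := by ring
      _ ≤ fB a := hb
  · filter_upwards [hmem] with a ha
    have hb := (fB_bounds ha.1 ha.2.le).2
    rw [div_le_iff₀ ha.1]
    calc fB a ≤ a * Real.exp (-a) + a^2 * Cb := hb
      _ = (Real.exp (-a) + a * Cb) * a := by ring

lemma tendsto_fB : Filter.Tendsto fB (nhdsWithin 0 (Set.Ioi 0)) (nhds 0) := by
  have hid : Filter.Tendsto (fun a : ℝ => a) (nhdsWithin 0 (Set.Ioi 0)) (nhds 0) :=
    Filter.tendsto_id.mono_left nhdsWithin_le_nhds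
  have := tendsto_fB_div.mul hid
  rw [mul_zero] at this
  apply this.congr'
  filter_upwards [self_mem_nhdsWithin] with a ha
  rw [div_mul_cancel₀ _ (ne_of_gt (Set.mem_Ioi.mp ha))]

lemma tendsto_KB : Filter.Tendsto KB (nhdsWithin 0 (Set.Ioi 0)) (nhds 1) := by
  have hid : Filter.Tendsto (fun a : ℝ => a) (nhdsWithin 0 (Set.Ioi 0)) (nhds 0) :=
    Filter.tendsto_id.mono_left nhdsWithin_le_nhds
  have hsub : Filter.Tendsto (fun a => a - fB a) (nhdsWithin 0 (Set.Ioi 0)) (nhds 0) := by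
    have := hid.sub tendsto_fB
    simpa using this
  have hexp : Filter.Tendsto (fun a => Real.exp (a - fB a))
      (nhdsWithin 0 (Set.Ioi 0)) (nhds 1) := by
    have := (Real.continuous_exp.tendsto 0).comp hsub
    simpa [Function.comp_def] using this
  have := tendsto_fB_div.mul hexp
  rw [mul_one] at this
  apply this.congr
  intro a
  rw [KB, mul_div_right_comm]

lemma borel_fB {l : ℝ} (hl0 : 0 ≤ l) (hl1 : l < 1) : fB l = l := by
  rcases eq_or_lt_of_le hl0 with h | hl
  · rw [← h]
    have hz : ∀ n : ℕ, tc n * ((0:ℝ) * Real.exp (-(0:ℝ)))^n = 0 := by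
      intro n
      cases n with
      | zero => simp [tc, That]
      | succ m => simp
    rw [fB, tsum_congr hz, tsum_zero]
  · have hKl : KB l = 1 := by
      have hev : ∀ᶠ a in nhdsWithin 0 (Set.Ioi 0), KB a = KB l := by
        filter_upwards [Ioo_mem_nhdsGT_of_mem
          (⟨le_refl (0:ℝ), hl⟩ : (0:ℝ) ∈ Set.Ico (0:ℝ) l)] with a ha
        exact (KB_const ha.1 ha.2.le hl1).symm ▸ rfl
      have hconst : Filter.Tendsto (fun _ : ℝ => KB l)
          (nhdsWithin 0 (Set.Ioi 0)) (nhds 1) := by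
        apply tendsto_KB.congr' hev
      exact (tendsto_nhds_unique tendsto_const_nhds hconst)
    have hEq : fB l * Real.exp (l - fB l) = l := by
      rw [KB, div_eq_one_iff_eq (ne_of_gt hl)] at hKl
      exact hKl
    have hEq2 : fB l * Real.exp (-(fB l)) = l * Real.exp (-l) := by
      have := congrArg (fun z => z * Real.exp (-l)) hEq
      rw [mul_assoc, ← Real.exp_add] at this
      rw [show l - fB l + -l = -(fB l) from by ring] at this
      exact this
    have hfmem : fB l ∈ Set.Icc (0:ℝ) 1 :=
      ⟨fB_nonneg hl0 hl1, (fB_lt_one hl0 hl1).le⟩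
    have hlmem : l ∈ Set.Icc (0:ℝ) 1 := ⟨hl0, hl1.le⟩
    exact w_mono.injOn hfmem hlmem hEq2

lemma borel_FB {l : ℝ} (hl0 : 0 ≤ l) (hl1 : l < 1) : FB l = 1/(1-l) := by
  have h1 := FB_eq hl0 hl1
  rw [borel_fB hl0 hl1] at h1
  have h2 : (1:ℝ) - l ≠ 0 := by intro h; rw [sub_eq_zero] at h; exact absurd h.symm (ne_of_lt hl1)
  field_simp
  linarith [h1]

lemma EE_mul {l : ℝ} (hl0 : 0 ≤ l) (hl1 : l < 1) {x y : ℝ} (hx : 0 ≤ x) (hy : 0 ≤ y) :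
    (∑' n, Ac x n * (l*Real.exp (-l))^n) * (∑' n, Ac y n * (l*Real.exp (-l))^n)
      = ∑' n, Ac (x+y) n * (l*Real.exp (-l))^n := by
  rw [tsum_mul_tsum_eq_tsum_sum_range_of_summable_norm
    (summable_norm_Ac hx hl0 hl1) (summable_norm_Ac hy hl0 hl1)]
  apply tsum_congr
  intro n
  have h1 : ∀ k ∈ range (n+1), (Ac x k * (l * Real.exp (-l))^k)
      * (Ac y (n-k) * (l * Real.exp (-l))^(n-k))
      = (Ac x k * Ac y (n-k)) * (l * Real.exp (-l))^n := by
    intro k hk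
    have hk' : k ≤ n := Nat.lt_succ_iff.mp (Finset.mem_range.mp hk)
    rw [show (Ac x k * (l * Real.exp (-l))^k) * (Ac y (n-k) * (l * Real.exp (-l))^(n-k))
      = (Ac x k * Ac y (n-k)) * ((l * Real.exp (-l))^k * (l * Real.exp (-l))^(n-k)) from by ring]
    rw [← pow_add]
    congr 2
    omega
  rw [Finset.sum_congr rfl h1, ← Finset.sum_mul, conv_Ac n x y]

lemma Ac_zero (n : ℕ) : Ac 0 n * (1:ℝ) = Ac 0 n := mul_one _

lemma EE_pow {l : ℝ} (hl0 : 0 ≤ l) (hl1 : l < 1) {x : ℝ} (hx : 0 ≤ x) :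
    ∀ m : ℕ, (∑' n, Ac ((m:ℝ)*x) n * (l*Real.exp (-l))^n)
      = (∑' n, Ac x n * (l*Real.exp (-l))^n)^m := by
  intro m
  induction m with
  | zero =>
    simp only [Nat.cast_zero, zero_mul, pow_zero]
    have hz : ∀ n : ℕ, Ac 0 n * (l*Real.exp (-l))^n
        = if n = 0 then (1:ℝ) else 0 := by
      intro n
      cases n with
      | zero => simp [Ac, Ahat]
      | succ k => simp [Ac, Ahat]
    rw [tsum_congr hz, tsum_ite_eq]
  | succ m ih =>
    have hcast : ((m+1:ℕ):ℝ) * x = (m:ℝ)*x + x := by push_cast; ring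
    rw [hcast, ← EE_mul hl0 hl1 (by positivity) hx, ih, pow_succ]

lemma EE_lower {l : ℝ} (hl0 : 0 ≤ l) (hl1 : l < 1) {c : ℝ} (hc : 0 ≤ c) :
    1 + c * l ≤ ∑' n, Ac c n * (l*Real.exp (-l))^n := by
  have hsum : Summable (fun n => Ac c n * (l*Real.exp (-l))^n) :=
    (summable_norm_Ac hc hl0 hl1).of_norm
  have hsum' : Summable (fun n => Ac c (n+1) * (l*Real.exp (-l))^(n+1)) :=
    (summable_nat_add_iff (f := fun n => Ac c n * (l*Real.exp (-l))^n) 1).mpr hsum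
  have hsumt : Summable (fun n => tc n * (l*Real.exp (-l))^n) :=
    (summable_norm_tc hl0 hl1).of_norm
  have hsumt' : Summable (fun n => tc (n+1) * (l*Real.exp (-l))^(n+1)) :=
    (summable_nat_add_iff (f := fun n => tc n * (l*Real.exp (-l))^n) 1).mpr hsumt
  rw [Summable.tsum_eq_zero_add hsum]
  rw [show Ac c 0 * (l*Real.exp (-l))^0 = 1 from by simp [Ac, Ahat]]
  have hfl : l = ∑' n, tc (n+1) * (l*Real.exp (-l))^(n+1) := by
    have h1 := borel_fB hl0 hl1
    rw [fB, Summable.tsum_eq_zero_add hsumt,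
      show tc 0 * (l*Real.exp (-l))^0 = 0 from by simp [tc, That], zero_add] at h1
    exact h1.symm
  have hterm : ∀ n : ℕ, c * (tc (n+1) * (l*Real.exp (-l))^(n+1))
      ≤ Ac c (n+1) * (l*Real.exp (-l))^(n+1) := by
    intro n
    rw [show c * (tc (n+1) * (l*Real.exp (-l))^(n+1))
      = (c * tc (n+1)) * (l*Real.exp (-l))^(n+1) from by ring]
    apply mul_le_mul_of_nonneg_right _ (pow_nonneg (w_nonneg hl0) _)
    simp only [Ac, Ahat, tc, That]
    have hpow : ((↑(n+1):ℝ))^n ≤ (c + (↑(n+1):ℝ))^n :=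
      pow_le_pow_left₀ (by positivity) (le_add_of_nonneg_left hc) n
    calc c * ((↑(n+1):ℝ)^n / ((n+1).factorial : ℝ))
        = c * (↑(n+1):ℝ)^n / ((n+1).factorial : ℝ) := by ring
      _ ≤ c * (c + (↑(n+1):ℝ))^n / ((n+1).factorial : ℝ) := by gcongr
  have hcl : c * l = ∑' n, c * (tc (n+1) * (l*Real.exp (-l))^(n+1)) := by
    rw [tsum_mul_left, ← hfl]
  rw [hcl]
  have hle := Summable.tsum_le_tsum hterm (hsumt'.mul_left c) hsum'
  linarith

lemma EE_upper {l : ℝ} (hl0 : 0 ≤ l) (hl1 : l < 1) {c : ℝ} (hc : 0 ≤ c) :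
    (∑' n, Ac c n * (l*Real.exp (-l))^n) ≤ 1 + (c * Real.exp c) * l := by
  have hsum : Summable (fun n => Ac c n * (l*Real.exp (-l))^n) :=
    (summable_norm_Ac hc hl0 hl1).of_norm
  have hsum' : Summable (fun n => Ac c (n+1) * (l*Real.exp (-l))^(n+1)) :=
    (summable_nat_add_iff (f := fun n => Ac c n * (l*Real.exp (-l))^n) 1).mpr hsum
  have hsumt : Summable (fun n => tc n * (l*Real.exp (-l))^n) :=
    (summable_norm_tc hl0 hl1).of_norm
  have hsumt' : Summable (fun n => tc (n+1) * (l*Real.exp (-l))^(n+1)) :=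
    (summable_nat_add_iff (f := fun n => tc n * (l*Real.exp (-l))^n) 1).mpr hsumt
  rw [Summable.tsum_eq_zero_add hsum]
  rw [show Ac c 0 * (l*Real.exp (-l))^0 = 1 from by simp [Ac, Ahat]]
  have hfl : l = ∑' n, tc (n+1) * (l*Real.exp (-l))^(n+1) := by
    have h1 := borel_fB hl0 hl1
    rw [fB, Summable.tsum_eq_zero_add hsumt,
      show tc 0 * (l*Real.exp (-l))^0 = 0 from by simp [tc, That], zero_add] at h1
    exact h1.symm
  have hterm : ∀ n : ℕ, Ac c (n+1) * (l*Real.exp (-l))^(n+1)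
      ≤ (c * Real.exp c) * (tc (n+1) * (l*Real.exp (-l))^(n+1)) := by
    intro n
    rw [show (c * Real.exp c) * (tc (n+1) * (l*Real.exp (-l))^(n+1))
      = ((c * Real.exp c) * tc (n+1)) * (l*Real.exp (-l))^(n+1) from by ring]
    apply mul_le_mul_of_nonneg_right _ (pow_nonneg (w_nonneg hl0) _)
    simp only [Ac, Ahat, tc, That]
    have hpow : (c + (↑(n+1):ℝ))^n ≤ ((↑(n+1):ℝ))^n * Real.exp c :=
      add_pow_le_exp_mul hc (Nat.le_succ n)
    calc c * (c + (↑(n+1):ℝ))^n / ((n+1).factorial : ℝ)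
        ≤ c * (((↑(n+1):ℝ))^n * Real.exp c) / ((n+1).factorial : ℝ) := by gcongr
      _ = c * Real.exp c * ((↑(n+1):ℝ)^n / ((n+1).factorial : ℝ)) := by ring
  have hcl : (c * Real.exp c) * l
      = ∑' n, (c * Real.exp c) * (tc (n+1) * (l*Real.exp (-l))^(n+1)) := by
    rw [tsum_mul_left, ← hfl]
  rw [hcl]
  have hle := Summable.tsum_le_tsum hterm hsum' (hsumt'.mul_left (c * Real.exp c))
  linarith

lemma EE_eq_exp {l : ℝ} (hl0 : 0 ≤ l) (hl1 : l < 1) {a : ℝ} (ha : 0 ≤ a) :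
    (∑' n, Ac a n * (l*Real.exp (-l))^n) = Real.exp (a * l) := by
  set E := ∑' n, Ac a n * (l*Real.exp (-l))^n with hE
  have hpowm : ∀ m : ℕ, 1 ≤ m → (1 + (a*l)/m)^m ≤ E
      ∧ E ≤ Real.exp ((a*l) * Real.exp (a/m)) := by
    intro m hm
    have hm0 : (0:ℝ) < m := Nat.cast_pos.mpr hm
    have ham : 0 ≤ a/(m:ℝ) := by positivity
    have hsplit : E = (∑' n, Ac (a/m) n * (l*Real.exp (-l))^n)^m := by
      have hep := EE_pow hl0 hl1 ham m
      rw [show ((m:ℕ):ℝ) * (a/(m:ℝ)) = a from by field_simp] at hep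
      rw [hE]
      exact hep
    have hlow := EE_lower hl0 hl1 (c := a/(m:ℝ)) ham
    have hup := EE_upper hl0 hl1 (c := a/(m:ℝ)) ham
    have hnn : (0:ℝ) ≤ 1 + (a/(m:ℝ))*l := by positivity
    constructor
    · rw [hsplit]
      calc (1 + (a*l)/m)^m = (1 + (a/(m:ℝ))*l)^m := by
            rw [show (a*l)/(m:ℝ) = (a/(m:ℝ))*l from by ring]
        _ ≤ (∑' n, Ac (a/m) n * (l*Real.exp (-l))^n)^m :=
            pow_le_pow_left₀ hnn hlow m
    · rw [hsplit]
      have hnn2 : (0:ℝ) ≤ ∑' n, Ac (a/m) n * (l*Real.exp (-l))^n := le_trans hnn hlow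
      calc (∑' n, Ac (a/m) n * (l*Real.exp (-l))^n)^m
          ≤ (1 + (a/(m:ℝ)) * Real.exp (a/(m:ℝ)) * l)^m := by
            apply pow_le_pow_left₀ hnn2 _ m
            calc (∑' n, Ac (a/m) n * (l*Real.exp (-l))^n)
                ≤ 1 + (a/(m:ℝ) * Real.exp (a/(m:ℝ))) * l := hup
              _ = 1 + (a/(m:ℝ)) * Real.exp (a/(m:ℝ)) * l := by ring
        _ ≤ (Real.exp ((a/(m:ℝ)) * Real.exp (a/(m:ℝ)) * l))^m := by
            apply pow_le_pow_left₀ (by positivity) _ m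
            have := Real.add_one_le_exp ((a/(m:ℝ)) * Real.exp (a/(m:ℝ)) * l)
            linarith
        _ = Real.exp (((a/(m:ℝ)) * Real.exp (a/(m:ℝ)) * l) * m) := by
            rw [← Real.exp_nat_mul]
            ring_nf
        _ = Real.exp ((a*l) * Real.exp (a/(m:ℝ))) := by
            congr 1
            field_simp
  have hlim1 : Filter.Tendsto (fun m : ℕ => (1 + (a*l)/m)^m)
      Filter.atTop (nhds (Real.exp (a*l))) := Real.tendsto_one_add_div_pow_exp (a*l)
  have hEge : Real.exp (a*l) ≤ E :=
    le_of_tendsto hlim1 (Filter.eventually_atTop.mpr ⟨1, fun m hm => (hpowm m hm).1⟩)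
  have hlim2 : Filter.Tendsto (fun m : ℕ => Real.exp ((a*l) * Real.exp (a/(m:ℝ))))
      Filter.atTop (nhds (Real.exp (a*l))) := by
    have h3 : Filter.Tendsto (fun m : ℕ => a/(m:ℝ)) Filter.atTop (nhds 0) :=
      tendsto_const_div_atTop_nhds_zero_nat a
    have h4 : Filter.Tendsto (fun m : ℕ => (a*l) * Real.exp (a/(m:ℝ)))
        Filter.atTop (nhds ((a*l) * Real.exp 0)) :=
      tendsto_const_nhds.mul ((Real.continuous_exp.tendsto 0).comp h3)
    have h5 := (Real.continuous_exp.tendsto _).comp h4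
    simpa [Function.comp_def] using h5
  have hEle : E ≤ Real.exp (a*l) :=
    ge_of_tendsto hlim2 (Filter.eventually_atTop.mpr ⟨1, fun m hm => (hpowm m hm).2⟩)
  linarith

end GPD

theorem gpd_sum_eq_one_div (θ l : ℝ) (hθ : 0 < θ) (hl0 : 0 ≤ l) (hl1 : l < 1) :
    HasSum (fun n : ℕ => (θ + l * n) ^ n / n.factorial * Real.exp (-θ - l * n))
      (1 / (1 - l)) := by
  rcases eq_or_lt_of_le hl0 with h0 | hl
  · -- l = 0 : Poisson case
    subst h0
    have h1 : HasSum (fun n : ℕ => θ^n / n.factorial) (Real.exp θ) :=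
      Real.exp_eq_exp_ℝ ▸ NormedSpace.expSeries_div_hasSum_exp θ
    have h2 := h1.mul_right (Real.exp (-θ))
    have h3 : Real.exp θ * Real.exp (-θ) = 1 := by
      rw [← Real.exp_add]; simp
    rw [h3] at h2
    have hfun : (fun n : ℕ => (θ + 0 * n) ^ n / n.factorial * Real.exp (-θ - 0 * n))
        = fun n : ℕ => θ^n / n.factorial * Real.exp (-θ) := by
      funext n
      norm_num
    rw [hfun]
    simpa using h2
  · -- l > 0
    set a := θ / l with ha_def
    have ha : 0 ≤ a := by positivity
    have hla : l * a = θ := by rw [ha_def]; field_simp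
    have hsumA := GPD.summable_norm_Ac ha hl0 hl1
    have hsumU := GPD.summable_norm_uc hl0 hl1
    -- Cauchy product : V = E * F
    have hprod := tsum_mul_tsum_eq_tsum_sum_range_of_summable_norm hsumA hsumU
    have hterm : ∀ n : ℕ, ∑ k ∈ Finset.range (n+1),
        (GPD.Ac a k * (l * Real.exp (-l))^k) * (GPD.uc (n-k) * (l * Real.exp (-l))^(n-k))
        = ((a + (n:ℝ))^n / n.factorial) * (l * Real.exp (-l))^n := by
      intro n
      have h1 : ∀ k ∈ Finset.range (n+1), (GPD.Ac a k * (l * Real.exp (-l))^k)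
          * (GPD.uc (n-k) * (l * Real.exp (-l))^(n-k))
          = (GPD.Ac a k * GPD.uc (n-k)) * (l * Real.exp (-l))^n := by
        intro k hk
        have hk' : k ≤ n := Nat.lt_succ_iff.mp (Finset.mem_range.mp hk)
        rw [show (GPD.Ac a k * (l * Real.exp (-l))^k)
          * (GPD.uc (n-k) * (l * Real.exp (-l))^(n-k))
          = (GPD.Ac a k * GPD.uc (n-k))
            * ((l * Real.exp (-l))^k * (l * Real.exp (-l))^(n-k)) from by ring]
        rw [← pow_add]
        congr 2
        omega
      rw [Finset.sum_congr rfl h1, ← Finset.sum_mul, GPD.conv_Ac_uc n a]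
    have hVsum : Summable (fun n : ℕ => ((a + (n:ℝ))^n / n.factorial)
        * (l * Real.exp (-l))^n) :=
      ((summable_norm_sum_mul_range_of_summable_norm hsumA hsumU).of_norm).congr hterm
    have hVal : (∑' n : ℕ, ((a + (n:ℝ))^n / n.factorial) * (l * Real.exp (-l))^n)
        = Real.exp θ * (1/(1-l)) := by
      rw [← tsum_congr hterm, ← hprod, GPD.EE_eq_exp hl0 hl1 ha,
        show (∑' n : ℕ, GPD.uc n * (l * Real.exp (-l))^n) = GPD.FB l from rfl,
        GPD.borel_FB hl0 hl1]
      rw [show a * l = θ from by rw [← hla]; ring]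
    have hV : HasSum (fun n : ℕ => ((a + (n:ℝ))^n / n.factorial) * (l * Real.exp (-l))^n)
        (Real.exp θ * (1/(1-l))) := hVsum.hasSum_iff.mpr hVal
    have hV2 := hV.mul_left (Real.exp (-θ))
    have hne : Real.exp (-θ) * (Real.exp θ * (1/(1-l))) = 1/(1-l) := by
      rw [← mul_assoc, ← Real.exp_add]
      simp
    rw [hne] at hV2
    have hfun : (fun n : ℕ => (θ + l * n) ^ n / n.factorial * Real.exp (-θ - l * n))
        = fun n : ℕ => Real.exp (-θ)
          * (((a + (n:ℝ))^n / n.factorial) * (l * Real.exp (-l))^n) := by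
      funext n
      have h1 : (θ + l * n) = l * (a + (n:ℝ)) := by
        rw [← hla]; ring
      have h2 : (l * Real.exp (-l))^n = l^n * Real.exp (-(l*n)) := by
        rw [mul_pow, ← Real.exp_nat_mul]
        ring_nf
      have h3 : Real.exp (-θ - l*n) = Real.exp (-θ) * Real.exp (-(l*n)) := by
        rw [← Real.exp_add]
        ring_nf
      rw [h1, mul_pow, h2, h3]
      ring
    rw [hfun]
    exact hV2
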